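/- Let X and Y be sets, v : X → (0,∞) and w : Y → (0,∞) be weight functions, E a normed vector space, and f : X × Y → E. Then the function (x,y) ↦ v(x)·w(y)·‖f(x,y)‖ tends to 0 along the cofinite filter on X × Y if and only if the following two conditions hold: (a) for every x ∈ X, the function y ↦ w(y)·‖f(x,y)‖ tends to 0 along the cofinite filter on Y; and (b) the function x ↦ v(x)·sup_{y ∈ Y} w(y)·‖f(x,y)‖ (supremum taken in [0,∞]) tends to 0 along the cofinite filter on X. -/

import Mathlib

open Filter

/-- **Exponential law for weighted `c₀`-spaces** (Lemma `c0exp`).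
For weights `v : X → (0,∞)`, `w : Y → (0,∞)` and a normed vector space `E`, a function
`f : X × Y → E` satisfies `v(x)·w(y)·‖f(x,y)‖ → 0` along the cofinite filter on `X × Y`
iff each slice `y ↦ w(y)·‖f(x,y)‖` tends to `0` along the cofinite filter on `Y` and
`x ↦ v(x)·sup_y w(y)·‖f(x,y)‖` (supremum in `[0,∞]`) tends to `0` along the cofinite
filter on `X`. -/
theorem c0_exponential_law {X Y : Type*} (E : Type*) [NormedAddCommGroup E]
    [NormedSpace ℝ E]
    (v : X → ℝ) (w : Y → ℝ) (hv : ∀ x, 0 < v x) (hw : ∀ y, 0 < w y)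
    (f : X → Y → E) :
    Tendsto (fun q : X × Y => v q.1 * w q.2 * ‖f q.1 q.2‖) cofinite (nhds 0) ↔
      ((∀ x, Tendsto (fun y => w y * ‖f x y‖) cofinite (nhds 0)) ∧
        Tendsto (fun x => ENNReal.ofReal (v x) * ⨆ y, ENNReal.ofReal (w y * ‖f x y‖))
          cofinite (nhds 0)) := by
  have hg : ∀ x y, (0:ℝ) ≤ v x * w y * ‖f x y‖ := fun x y =>
    mul_nonneg (mul_nonneg (hv x).le (hw y).le) (norm_nonneg _)
  have hwf : ∀ x y, (0:ℝ) ≤ w y * ‖f x y‖ := fun x y =>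
    mul_nonneg (hw y).le (norm_nonneg _)
  constructor
  · intro h
    have key : ∀ ε : ℝ, 0 < ε →
        {q : X × Y | ε ≤ v q.1 * w q.2 * ‖f q.1 q.2‖}.Finite := by
      intro ε hε
      have h1 := Metric.tendsto_nhds.mp h ε hε
      rw [eventually_cofinite] at h1
      refine h1.subset ?_
      intro q hq
      simp only [Set.mem_setOf_eq, not_lt, dist_zero_right, Real.norm_eq_abs] at hq ⊢
      rwa [abs_of_nonneg (hg q.1 q.2)]
    constructor
    · intro x
      rw [Metric.tendsto_nhds]
      intro ε hε
      rw [eventually_cofinite]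
      have h1 := key (v x * ε) (mul_pos (hv x) hε)
      have hsub : {y | ¬ dist (w y * ‖f x y‖) 0 < ε} ⊆
          Prod.mk x ⁻¹' {q : X × Y | v x * ε ≤ v q.1 * w q.2 * ‖f q.1 q.2‖} := by
        intro y hy
        simp only [Set.mem_setOf_eq, not_lt, dist_zero_right, Real.norm_eq_abs,
          Set.mem_preimage] at hy ⊢
        rw [abs_of_nonneg (hwf x y)] at hy
        calc v x * ε ≤ v x * (w y * ‖f x y‖) :=
              mul_le_mul_of_nonneg_left hy (hv x).le
          _ = v x * w y * ‖f x y‖ := by ring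
      exact (h1.preimage ((Prod.mk_right_injective x).injOn)).subset hsub
    · rw [ENNReal.tendsto_nhds_zero]
      intro ε hε
      obtain ⟨c, hc0, hcε⟩ := exists_between hε
      have hcne : c ≠ ⊤ := (lt_of_lt_of_le hcε le_top).ne
      set r := c.toReal with hr_def
      have hr : 0 < r := ENNReal.toReal_pos hc0.ne' hcne
      have hfin := key r hr
      rw [eventually_cofinite]
      refine ((hfin.image Prod.fst).subset ?_).subset fun x hx => hx
      intro x hx
      simp only [Set.mem_setOf_eq, not_le] at hx
      have hcx : c < ENNReal.ofReal (v x) * ⨆ y, ENNReal.ofReal (w y * ‖f x y‖) :=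
        hcε.trans hx
      rw [ENNReal.mul_iSup] at hcx
      obtain ⟨y, hy⟩ := lt_iSup_iff.mp hcx
      rw [← ENNReal.ofReal_mul (hv x).le, ← ENNReal.ofReal_toReal hcne, ← hr_def] at hy
      have hlt : r < v x * (w y * ‖f x y‖) :=
        (ENNReal.ofReal_lt_ofReal_iff_of_nonneg hr.le).mp hy
      exact ⟨(x, y), by simp only [Set.mem_setOf_eq]; nlinarith, rfl⟩
  · rintro ⟨ha, hb⟩
    rw [Metric.tendsto_nhds]
    intro ε hε
    rw [eventually_cofinite]
    have hA : {x | ENNReal.ofReal ε ≤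
        ENNReal.ofReal (v x) * ⨆ y, ENNReal.ofReal (w y * ‖f x y‖)}.Finite := by
      have h2 := ENNReal.tendsto_nhds_zero.mp hb (ENNReal.ofReal (ε / 2))
        (by simpa [ENNReal.ofReal_pos] using half_pos hε)
      rw [eventually_cofinite] at h2
      refine h2.subset ?_
      intro x hx
      simp only [Set.mem_setOf_eq, not_le] at hx ⊢
      exact lt_of_lt_of_le ((ENNReal.ofReal_lt_ofReal_iff hε).mpr (half_lt_self hε)) hx
    have hfib : ∀ x, {y | ε / v x ≤ w y * ‖f x y‖}.Finite := by
      intro x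
      have h1 := Metric.tendsto_nhds.mp (ha x) (ε / v x) (div_pos hε (hv x))
      rw [eventually_cofinite] at h1
      refine h1.subset ?_
      intro y hy
      simp only [Set.mem_setOf_eq, not_lt, dist_zero_right, Real.norm_eq_abs] at hy ⊢
      rwa [abs_of_nonneg (hwf x y)]
    have hfin : (⋃ x ∈ {x | ENNReal.ofReal ε ≤
        ENNReal.ofReal (v x) * ⨆ y, ENNReal.ofReal (w y * ‖f x y‖)},
        Prod.mk x '' {y | ε / v x ≤ w y * ‖f x y‖}).Finite :=
      hA.biUnion fun x _ => (hfib x).image _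
    refine hfin.subset ?_
    intro q hq
    simp only [Set.mem_setOf_eq, not_lt, dist_zero_right, Real.norm_eq_abs] at hq
    rw [abs_of_nonneg (hg q.1 q.2)] at hq
    refine Set.mem_biUnion (x := q.1) ?_ ?_
    · show ENNReal.ofReal ε ≤ _
      calc ENNReal.ofReal ε ≤ ENNReal.ofReal (v q.1 * w q.2 * ‖f q.1 q.2‖) :=
            ENNReal.ofReal_le_ofReal hq
        _ = ENNReal.ofReal (v q.1) * ENNReal.ofReal (w q.2 * ‖f q.1 q.2‖) := by
            rw [mul_assoc, ENNReal.ofReal_mul (hv _).le]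
        _ ≤ ENNReal.ofReal (v q.1) * ⨆ y, ENNReal.ofReal (w y * ‖f q.1 y‖) :=
            mul_le_mul_right (le_iSup (fun y => ENNReal.ofReal (w y * ‖f q.1 y‖)) q.2) _
    · refine ⟨q.2, ?_, rfl⟩
      simp only [Set.mem_setOf_eq]
      rw [div_le_iff₀ (hv q.1)]
      nlinarith
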